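/- If G is a finite simple connected graph of order n ≥ 3 which contains a cycle, then rvcl(G) ≥ 3. -/

import Mathlib

namespace LocatingRainbow

open SimpleGraph

variable {V : Type*}

/-- The internal vertices of a walk: its support without the endpoints. -/
def internalVertices {G : SimpleGraph V} {u v : V} (p : G.Walk u v) : List V :=
  p.support.tail.dropLast

/-- `c` is a rainbow vertex coloring of `G` (with colors in `Fin k`) if any two distinct
vertices are joined by a path whose internal vertices have pairwise distinct colors. -/
def IsRainbowVertexColoring (G : SimpleGraph V) {k : ℕ} (c : V → Fin k) : Prop :=
  ∀ u v : V, u ≠ v → ∃ p : G.Walk u v, p.IsPath ∧ ((internalVertices p).map c).Nodup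

/-- The distance from a vertex `v` to the color class of the color `i`. -/
noncomputable def distToColor (G : SimpleGraph V) {k : ℕ} (c : V → Fin k) (v : V) (i : Fin k) :
    ℕ :=
  sInf {m | ∃ y, c y = i ∧ G.dist v y = m}

/-- The rainbow code of a vertex `v`: the vector of distances to all color classes. -/
noncomputable def rainbowCode (G : SimpleGraph V) {k : ℕ} (c : V → Fin k) (v : V) :
    Fin k → ℕ :=
  fun i => distToColor G c v i

/-- `c` is a locating rainbow coloring if it is a rainbow vertex coloring and distinct
vertices have distinct rainbow codes. -/
def IsLocatingRainbowColoring (G : SimpleGraph V) {k : ℕ} (c : V → Fin k) : Prop :=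
  IsRainbowVertexColoring G c ∧ Function.Injective (rainbowCode G c)

/-- The rainbow vertex connection number of `G`. -/
noncomputable def rvc (G : SimpleGraph V) : ℕ :=
  sInf {k | ∃ c : V → Fin k, IsRainbowVertexColoring G c}

/-- The locating rainbow connection number of `G`. -/
noncomputable def rvcl (G : SimpleGraph V) : ℕ :=
  sInf {k | ∃ c : V → Fin k, IsLocatingRainbowColoring G c}

end LocatingRainbow

section Aux

open LocatingRainbow SimpleGraph

variable {V : Type*}

private lemma fin2_cases : ∀ a b x : Fin 2, a ≠ b → x = a ∨ x = b := by decide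

private lemma fin2_eq_of_ne : ∀ a b j : Fin 2, a ≠ j → b ≠ j → a = b := by decide

lemma distToColor_eq_zero (G : SimpleGraph V) {k : ℕ} {c : V → Fin k} {v : V} {i : Fin k}
    (h : c v = i) : distToColor G c v i = 0 :=
  Nat.eq_zero_of_le_zero (Nat.sInf_le ⟨v, h, SimpleGraph.dist_self⟩)

lemma distToColor_pos (G : SimpleGraph V) (hG : G.Connected) {k : ℕ} {c : V → Fin k}
    {v : V} {j : Fin k} (hv : c v ≠ j) (hj : ∃ y, c y = j) :
    distToColor G c v j ≠ 0 := by
  intro h0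
  rcases hj with ⟨y, hy⟩
  rcases Nat.sInf_eq_zero.mp h0 with ⟨z, hz, hdz⟩ | hemp
  · exact hv (by rw [hG.dist_eq_zero_iff.mp hdz]; exact hz)
  · exact absurd hemp (Set.nonempty_iff_ne_empty.mp ⟨G.dist v y, y, hy, rfl⟩)

lemma distToColor_le_two (G : SimpleGraph V) {c : V → Fin 2}
    (hr : IsRainbowVertexColoring G c) {v : V} {j : Fin 2} (hv : c v ≠ j)
    {y : V} (hy : c y = j) : distToColor G c v j ≤ 2 := by
  have hvy : v ≠ y := fun h => hv (h ▸ hy)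
  obtain ⟨p, hp, hnd⟩ := hr v y hvy
  have hlen : p.length ≤ 3 := by
    have h1 : ((internalVertices p).map c).length ≤ 2 := by
      simpa using hnd.length_le_card
    have h2 : (internalVertices p).length = p.length + 1 - 1 - 1 := by
      simp [internalVertices, Walk.length_support]
    rw [List.length_map] at h1
    omega
  by_cases h3 : p.length ≤ 2
  · exact le_trans (Nat.sInf_le ⟨y, hy, rfl⟩) (le_trans (SimpleGraph.dist_le p) h3)
  · have hl3 : p.length = 3 := by omega
    have hnn1 : ¬ p.Nil := by rw [Walk.not_nil_iff_lt_length]; omega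
    obtain ⟨a, ha, q, rfl⟩ := Walk.not_nil_iff.mp hnn1
    have hlq : q.length = 2 := by simp [Walk.length_cons] at hl3; omega
    have hnn2 : ¬ q.Nil := by rw [Walk.not_nil_iff_lt_length]; omega
    obtain ⟨b, hb, r, rfl⟩ := Walk.not_nil_iff.mp hnn2
    have hlr : r.length = 1 := by simp [Walk.length_cons] at hlq; omega
    have hnn3 : ¬ r.Nil := by rw [Walk.not_nil_iff_lt_length]; omega
    obtain ⟨d, hd, s, rfl⟩ := Walk.not_nil_iff.mp hnn3
    have hls : s.length = 0 := by simp only [Walk.length_cons] at hlr; omega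
    have hs1 : s.support.length = 1 := by rw [Walk.length_support]; omega
    obtain ⟨w, hw⟩ := List.length_eq_one_iff.mp hs1
    have hint : internalVertices (Walk.cons ha (Walk.cons hb (Walk.cons hd s))) = [a, b] := by
      simp [internalVertices, Walk.support_cons, hw]
    rw [hint] at hnd
    have hab : c a ≠ c b := by simpa using hnd
    have hd1 : G.dist v a ≤ 1 := by
      simpa using SimpleGraph.dist_le (Walk.cons ha Walk.nil)
    have hd2 : G.dist v b ≤ 2 := by
      simpa using SimpleGraph.dist_le (Walk.cons ha (Walk.cons hb Walk.nil))
    rcases fin2_cases (c a) (c b) j hab with hja | hjb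
    · exact le_trans (Nat.sInf_le ⟨a, hja.symm, rfl⟩) (by omega)
    · exact le_trans (Nat.sInf_le ⟨b, hjb.symm, rfl⟩) hd2

lemma code_ne (G : SimpleGraph V) {c : V → Fin 2}
    (hinj : Function.Injective (rainbowCode G c))
    {u v : V} (huv : u ≠ v) (hcc : c u = c v) {j : Fin 2} (hj : c u ≠ j) :
    distToColor G c u j ≠ distToColor G c v j := by
  intro h
  apply huv
  apply hinj
  funext x
  rcases fin2_cases (c u) j x hj with rfl | rfl
  · show distToColor G c u (c u) = distToColor G c v (c u)
    rw [distToColor_eq_zero G rfl, distToColor_eq_zero G hcc.symm]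
  · exact h

lemma cycle_two_neighbors {G : SimpleGraph V} {v : V} {q : G.Walk v v} (hq : q.IsCycle) :
    ∃ x y, x ≠ y ∧ G.Adj v x ∧ G.Adj v y := by
  obtain ⟨x, hx, q1, rfl⟩ := Walk.not_nil_iff.mp hq.not_nil
  rw [Walk.cons_isCycle_iff] at hq
  obtain ⟨hq1, hedge⟩ := hq
  have hns : ¬ q1.reverse.Nil := Walk.not_nil_of_ne (fun h => G.loopless.irrefl v (h ▸ hx))
  obtain ⟨y, hy, r, hr⟩ := Walk.not_nil_iff.mp hns
  refine ⟨x, y, ?_, hx, hy⟩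
  rintro rfl
  apply hedge
  have hmem : s(v, x) ∈ q1.reverse.edges := by rw [hr]; simp
  rwa [Walk.edges_reverse, List.mem_reverse] at hmem

lemma final_contra [Fintype V] {G : SimpleGraph V} (hG : G.Connected) {c : V → Fin 2}
    (hr : IsRainbowVertexColoring G c) (hinj : Function.Injective (rainbowCode G c))
    (hful : ∀ j : Fin 2, ∃ y, c y = j) {v : V} {j : Fin 2} (hvj : c v ≠ j)
    (hd : distToColor G c v j = 2)
    {x y : V} (hxy : x ≠ y) (hx : G.Adj v x) (hy : G.Adj v y) : False := by
  obtain ⟨z, hzj⟩ := hful j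
  have hnb : ∀ w, G.Adj v w → c w ≠ j := by
    intro w hw hcw
    have h1 : G.dist v w ≤ 1 := by simpa using SimpleGraph.dist_le (Walk.cons hw Walk.nil)
    have : distToColor G c v j ≤ 1 := le_trans (Nat.sInf_le ⟨w, hcw, rfl⟩) h1
    omega
  have hxj := hnb x hx
  have hyj := hnb y hy
  have hx1 : distToColor G c x j ≠ 0 := distToColor_pos G hG hxj ⟨z, hzj⟩
  have hx2 : distToColor G c x j ≤ 2 := distToColor_le_two G hr hxj hzj
  have hy1 : distToColor G c y j ≠ 0 := distToColor_pos G hG hyj ⟨z, hzj⟩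
  have hy2 : distToColor G c y j ≤ 2 := distToColor_le_two G hr hyj hzj
  have hxv : x ≠ v := fun h => G.loopless.irrefl v (h ▸ hx)
  have hyv : y ≠ v := fun h => G.loopless.irrefl v (h ▸ hy)
  have hcx : c x = c v := fin2_eq_of_ne _ _ _ hxj hvj
  have hcy : c y = c v := fin2_eq_of_ne _ _ _ hyj hvj
  have n1 := code_ne G hinj hxv hcx hxj
  have n2 := code_ne G hinj hyv hcy hyj
  have n3 := code_ne G hinj hxy (hcx.trans hcy.symm) hxj
  rw [hd] at n1 n2
  omega

lemma no_two_coloring [Fintype V] (G : SimpleGraph V) (hG : G.Connected)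
    (hn : 3 ≤ Fintype.card V) (hcyc : ¬ G.IsAcyclic) (c : V → Fin 2)
    (hc : IsLocatingRainbowColoring G c) : False := by
  classical
  obtain ⟨hr, hinj⟩ := hc
  simp only [SimpleGraph.IsAcyclic] at hcyc
  push_neg at hcyc
  obtain ⟨a, p, hp⟩ := hcyc
  by_cases hful : ∀ j : Fin 2, ∃ y, c y = j
  · -- both color classes nonempty; pigeonhole on the cycle
    have hlen := hp.three_le_length
    have hnd : p.support.tail.Nodup := hp.2
    have htl : p.support.tail.length = p.length := by
      have := Walk.length_support p
      cases h : p.support with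
      | nil => simp [h] at this
      | cons hd tl => simp [h] at this ⊢; omega
    have hcard : (Finset.univ : Finset (Fin 2)).card < p.support.tail.toFinset.card := by
      rw [List.toFinset_card_of_nodup hnd, htl, Finset.card_univ, Fintype.card_fin]
      omega
    obtain ⟨u, hu, w, hw, huw, hcc⟩ :=
      Finset.exists_ne_map_eq_of_card_lt_of_maps_to hcard
        (fun x _ => Finset.mem_univ (c x))
    have hu' : u ∈ p.support := List.mem_of_mem_tail (List.mem_toFinset.mp hu)
    have hw' : w ∈ p.support := List.mem_of_mem_tail (List.mem_toFinset.mp hw)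
    set j : Fin 2 := c u + 1 with hjdef
    have hju : c u ≠ j := by
      have : ∀ i : Fin 2, i ≠ i + 1 := by decide
      exact this (c u)
    have hjw : c w ≠ j := hcc ▸ hju
    obtain ⟨z, hzj⟩ := hful j
    have h1 : distToColor G c u j ≠ 0 := distToColor_pos G hG hju ⟨z, hzj⟩
    have h2 : distToColor G c u j ≤ 2 := distToColor_le_two G hr hju hzj
    have h3 : distToColor G c w j ≠ 0 := distToColor_pos G hG hjw ⟨z, hzj⟩
    have h4 : distToColor G c w j ≤ 2 := distToColor_le_two G hr hjw hzj
    have h5 := code_ne G hinj huw hcc hju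
    have h6 : distToColor G c u j = 2 ∨ distToColor G c w j = 2 := by omega
    rcases h6 with h6 | h6
    · obtain ⟨x, y, hxy, hx, hy⟩ := cycle_two_neighbors (hp.rotate hu')
      exact final_contra hG hr hinj hful hju h6 hxy hx hy
    · obtain ⟨x, y, hxy, hx, hy⟩ := cycle_two_neighbors (hp.rotate hw')
      exact final_contra hG hr hinj hful hjw h6 hxy hx hy
  · -- some color class is empty: all rainbow codes coincide
    push_neg at hful
    obtain ⟨j, hj⟩ := hful
    obtain ⟨u, w, huw⟩ := Fintype.exists_pair_of_one_lt_card (α := V) (by omega)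
    apply huw
    apply hinj
    funext x
    show distToColor G c u x = distToColor G c w x
    by_cases hx : x = j
    · subst hx
      have e1 : {m | ∃ y, c y = x ∧ G.dist u y = m} = ∅ :=
        Set.eq_empty_iff_forall_notMem.mpr (fun m ⟨y, hy, _⟩ => hj y hy)
      have e2 : {m | ∃ y, c y = x ∧ G.dist w y = m} = ∅ :=
        Set.eq_empty_iff_forall_notMem.mpr (fun m ⟨y, hy, _⟩ => hj y hy)
      show sInf _ = sInf _
      rw [e1, e2]
    · have hcu : c u = x := fin2_eq_of_ne _ _ _ (hj u) hx
      have hcw : c w = x := fin2_eq_of_ne _ _ _ (hj w) hx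
      rw [distToColor_eq_zero G hcu, distToColor_eq_zero G hcw]

lemma cast_locating (G : SimpleGraph V) {k m : ℕ} (h : k ≤ m) {c : V → Fin k}
    (hc : IsLocatingRainbowColoring G c) :
    IsLocatingRainbowColoring G (fun v => Fin.castLE h (c v)) := by
  obtain ⟨hr, hinj⟩ := hc
  have hcast : Function.Injective (Fin.castLE h) := Fin.castLE_injective h
  constructor
  · intro u v huv
    obtain ⟨p, hp, hnd⟩ := hr u v huv
    refine ⟨p, hp, ?_⟩
    have : ((internalVertices p).map fun v => Fin.castLE h (c v)) =
        ((internalVertices p).map c).map (Fin.castLE h) := by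
      simp [List.map_map, Function.comp]
    rw [this]
    exact hnd.map hcast
  · intro u v huv
    apply hinj
    funext i
    have key : ∀ w, distToColor G c w i =
        distToColor G (fun v => Fin.castLE h (c v)) w (Fin.castLE h i) := by
      intro w
      show sInf _ = sInf _
      congr 1
      ext m'
      constructor
      · rintro ⟨y, hy, rfl⟩; exact ⟨y, congrArg (Fin.castLE h) hy, rfl⟩
      · rintro ⟨y, hy, rfl⟩; exact ⟨y, hcast hy, rfl⟩
    show distToColor G c u i = distToColor G c v i
    rw [key u, key v]
    exact congrFun huv (Fin.castLE h i)

lemma exists_locating [Fintype V] (G : SimpleGraph V) (hG : G.Connected) :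
    ∃ c : V → Fin (Fintype.card V), IsLocatingRainbowColoring G c := by
  classical
  let e := Fintype.equivFin V
  refine ⟨⇑e, ?_, ?_⟩
  · intro u v huv
    obtain ⟨w⟩ := hG.preconnected u v
    refine ⟨(w.toPath : G.Path u v).1, (w.toPath : G.Path u v).2, ?_⟩
    apply List.Nodup.map e.injective
    exact ((List.dropLast_sublist _).trans (List.tail_sublist _)).nodup
      (w.toPath : G.Path u v).2.support_nodup
  · intro u v h
    have h0 : distToColor G (⇑e) u (e v) = distToColor G (⇑e) v (e v) := congrFun h (e v)
    rw [distToColor_eq_zero G rfl] at h0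
    rcases Nat.sInf_eq_zero.mp h0 with ⟨y, hy, hd⟩ | hemp
    · have : y = v := e.injective hy
      subst this
      exact hG.dist_eq_zero_iff.mp hd
    · exact absurd hemp (Set.nonempty_iff_ne_empty.mp ⟨G.dist u v, v, rfl, rfl⟩)

end Aux

open LocatingRainbow in
/-- If `G` is a finite simple connected graph of order `n ≥ 3` containing a cycle,
then `rvcl(G) ≥ 3`. -/
theorem three_le_rvcl_of_cycle {V : Type*} [Fintype V] (G : SimpleGraph V)
    (hG : G.Connected) (hn : 3 ≤ Fintype.card V) (hcyc : ¬ G.IsAcyclic) :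
    3 ≤ rvcl G := by
  by_contra hlt
  push_neg at hlt
  have hmem : rvcl G ∈ {k | ∃ c : V → Fin k, IsLocatingRainbowColoring G c} :=
    Nat.sInf_mem ⟨Fintype.card V, exists_locating G hG⟩
  obtain ⟨c, hc⟩ := hmem
  have h2 : rvcl G ≤ 2 := by omega
  exact no_two_coloring G hG hn hcyc _ (cast_locating G h2 hc)
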